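/- Fix μ > 1 and γ = (μ²-1)/μ. Define for (x,y) with y > 0, 1 - |x| > 0 the quantities a₊ = μy + 1 - x, b₋ = μy - (1+x), c₋ = μ(1-x) - y, d₊ = μ(1+x) + y. For t ≤ 0 with c₋ > 0 and -t ≤ t₋₁(x,y) := (1/2)log(1 + 2μ(μy - (1-x))/(c₋·a₊)) (assuming μy - (1-x) ≥ 0), set B_I(t,x,y) = (μ/(μ²+1))·log( μ(a₊e^{-2t} - b₋) / (c₋e^{-2t} + d₊) ). Then B_I(0,x,y) = 0 and along the dynamics ẋ = y² + x² - 1, ẏ = 2xy + uγy², for every u ∈ [-1,1], d/dt[B_I(t,x(t),y(t))] + y ≥ 0, with equality when u = -1. -/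

import Mathlib

/-- The Bellman function `B_I` for the length-minimization control problem. -/
noncomputable def BI (μ t x y : ℝ) : ℝ :=
  (μ / (μ ^ 2 + 1)) *
    Real.log (μ * ((μ * y + 1 - x) * Real.exp (-2 * t) - (μ * y - (1 + x))) /
      ((μ * (1 - x) - y) * Real.exp (-2 * t) + (μ * (1 + x) + y)))

set_option maxHeartbeats 2000000 in
theorem stmt15 (μ γ : ℝ) (hμ : 1 < μ) (hγ : γ = (μ ^ 2 - 1) / μ) :
    (∀ x y : ℝ, 0 < y → |x| < 1 → BI μ 0 x y = 0) ∧
    (∀ (x y : ℝ → ℝ) (u t : ℝ), u ∈ Set.Icc (-1 : ℝ) 1 → t ≤ 0 →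
      0 < y t → |x t| < 1 →
      0 < μ * (1 - x t) - y t →
      0 ≤ μ * y t - (1 - x t) →
      -t ≤ (1 / 2) * Real.log (1 + 2 * μ * (μ * y t - (1 - x t)) /
        ((μ * (1 - x t) - y t) * (μ * y t + 1 - x t))) →
      μ⁻¹ * (1 + |x t|) ≤ y t → y t ≤ μ * (1 - |x t|) →
      HasDerivAt x ((y t) ^ 2 + (x t) ^ 2 - 1) t →
      HasDerivAt y (2 * x t * y t + u * γ * (y t) ^ 2) t →
      0 ≤ deriv (fun s => BI μ s (x s) (y s)) t + y t ∧
        (u = -1 → deriv (fun s => BI μ s (x s) (y s)) t + y t = 0)) := by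
  have hμ0 : (0:ℝ) < μ := by linarith
  constructor
  · intro x y hy hx
    unfold BI
    rw [show (-2 : ℝ) * 0 = 0 by ring, Real.exp_zero]
    rw [show μ * ((μ * y + 1 - x) * 1 - (μ * y - (1 + x))) /
        ((μ * (1 - x) - y) * 1 + (μ * (1 + x) + y)) = (2 * μ) / (2 * μ) by
      congr 1 <;> ring]
    rw [div_self (by linarith), Real.log_one, mul_zero]
  · intro x y u t hu ht hy0 hx1 hCpos hBnn _ _ _ hdx hdy
    obtain ⟨hx1l, hx1r⟩ := abs_lt.mp hx1
    set E : ℝ := Real.exp (-2 * t) with hEdef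
    have hE0 : 0 < E := Real.exp_pos _
    have hE1 : 1 ≤ E := by
      rw [hEdef]
      exact Real.one_le_exp (by linarith)
    set X := x t
    set Y := y t
    set dX : ℝ := Y ^ 2 + X ^ 2 - 1
    set dY : ℝ := 2 * X * Y + u * γ * Y ^ 2
    -- derivative of exp (-2 s)
    have hexp : HasDerivAt (fun s : ℝ => Real.exp (-2 * s)) (-2 * E) t := by
      have := ((hasDerivAt_id t).const_mul (-2 : ℝ)).exp
      simpa [hEdef, mul_comm] using this
    -- derivatives of the four linear pieces
    have hA : HasDerivAt (fun s => μ * y s + 1 - x s) (μ * dY - dX) t := by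
      exact ((hdy.const_mul μ).add_const 1).sub hdx
    have hB : HasDerivAt (fun s => μ * y s - (1 + x s)) (μ * dY - dX) t := by
      have h := (hdy.const_mul μ).sub ((hasDerivAt_const t (1:ℝ)).add hdx)
      rw [zero_add] at h
      exact h
    have hC : HasDerivAt (fun s => μ * (1 - x s) - y s) (μ * (0 - dX) - dY) t := by
      exact (((hasDerivAt_const t (1:ℝ)).sub hdx).const_mul μ).sub hdy
    have hDp : HasDerivAt (fun s => μ * (1 + x s) + y s) (μ * (0 + dX) + dY) t := by
      exact (((hasDerivAt_const t (1:ℝ)).add hdx).const_mul μ).add hdy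
    -- numerator and denominator
    have hN : HasDerivAt (fun s => (μ * y s + 1 - x s) * Real.exp (-2 * s) - (μ * y s - (1 + x s)))
        ((μ * dY - dX) * E + (μ * Y + 1 - X) * (-2 * E) - (μ * dY - dX)) t := (hA.mul hexp).sub hB
    have hD : HasDerivAt (fun s => (μ * (1 - x s) - y s) * Real.exp (-2 * s) + (μ * (1 + x s) + y s))
        ((μ * (0 - dX) - dY) * E + (μ * (1 - X) - Y) * (-2 * E) + (μ * (0 + dX) + dY)) t :=
      (hC.mul hexp).add hDp
    set Nt : ℝ := (μ * Y + 1 - X) * E - (μ * Y - (1 + X)) with hNtdef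
    set Dt : ℝ := (μ * (1 - X) - Y) * E + (μ * (1 + X) + Y) with hDtdef
    set N' : ℝ := (μ * dY - dX) * E + (μ * Y + 1 - X) * (-2 * E) - (μ * dY - dX)
    set D' : ℝ := (μ * (0 - dX) - dY) * E + (μ * (1 - X) - Y) * (-2 * E) + (μ * (0 + dX) + dY)
    have hA0 : 0 < μ * Y + 1 - X := by nlinarith
    have hNt0 : 0 < Nt := by
      rw [hNtdef]
      nlinarith [mul_nonneg hA0.le (sub_nonneg.mpr hE1)]
    have hDt0 : 0 < Dt := by
      rw [hDtdef]
      nlinarith [mul_pos hCpos hE0]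
    have hg : HasDerivAt (fun s => μ * ((μ * y s + 1 - x s) * Real.exp (-2 * s) - (μ * y s - (1 + x s))) /
        ((μ * (1 - x s) - y s) * Real.exp (-2 * s) + (μ * (1 + x s) + y s)))
        ((μ * N' * Dt - μ * Nt * D') / Dt ^ 2) t := (hN.const_mul μ).div hD hDt0.ne'
    have hgpos : 0 < μ * Nt / Dt := div_pos (mul_pos hμ0 hNt0) hDt0
    have hlog := hg.log hgpos.ne'
    have hf : HasDerivAt (fun s => BI μ s (x s) (y s))
        ((μ / (μ ^ 2 + 1)) * (((μ * N' * Dt - μ * Nt * D') / Dt ^ 2) / (μ * Nt / Dt))) t := by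
      exact hlog.const_mul (μ / (μ ^ 2 + 1))
    have hder := hf.deriv
    have hμsq : (0:ℝ) < μ ^ 2 + 1 := by positivity
    have hkey : (μ / (μ ^ 2 + 1)) * (((μ * N' * Dt - μ * Nt * D') / Dt ^ 2) / (μ * Nt / Dt)) + Y
        = Y ^ 2 * (μ ^ 2 - 1) * (E - 1) * (u + 1) * ((1 - X) * E + 1 + X) / (Dt * Nt) := by
      have hNt' := hNt0.ne'
      have hDt' := hDt0.ne'
      have hμ' := hμ0.ne'
      simp only [N', D', dX, dY, hγ]
      field_simp
      rw [hNtdef, hDtdef]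
      ring
    rw [hder, hkey]
    constructor
    · apply div_nonneg _ (mul_nonneg hDt0.le hNt0.le)
      have h1 : (0:ℝ) ≤ u + 1 := by linarith [hu.1]
      have h2 : (0:ℝ) ≤ E - 1 := by linarith
      have h3 : (0:ℝ) ≤ (1 - X) * E + 1 + X := by nlinarith
      have h4 : (0:ℝ) ≤ μ ^ 2 - 1 := by nlinarith
      positivity
    · intro hu1
      subst hu1
      norm_num
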